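/- Suppose (P*, λ*, μ*) is a KKT triple for the ED problem and b* ∈ ℝ^n satisfies λ* ≤ b*_i ≤ C_i'(P*_i) for all i. Then for every i, P*_i is a maximizer of the map P ↦ P b*_i − C_i(P) over P ≥ 0. -/
import Mathlib


open Finset

noncomputable section

/-- Feasible production profiles for the dispatch problems:
power balance `1ᵀP = 1ᵀP_d` and componentwise nonnegativity. -/
def Feasible {n : ℕ} (Pd P : Fin n → ℝ) : Prop :=
  (∑ i, P i = ∑ i, Pd i) ∧ ∀ i, 0 ≤ P i

/-- `P` is an optimizer of the ISO problem for bids `b`: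
it minimizes `bᵀP` over the feasible set. -/
def IsISOOpt {n : ℕ} (Pd b P : Fin n → ℝ) : Prop :=
  Feasible Pd P ∧ ∀ Q, Feasible Pd Q → ∑ i, b i * P i ≤ ∑ i, b i * Q i

/-- `P` is a minimizer of the economic dispatch (ED) problem. -/
def IsEDOpt {n : ℕ} (C : Fin n → ℝ → ℝ) (Pd P : Fin n → ℝ) : Prop :=
  Feasible Pd P ∧ ∀ Q, Feasible Pd Q → ∑ i, C i (P i) ≤ ∑ i, C i (Q i)

/-- `(P, lam, mu)` is a KKT triple for the ED problem, with `C' i` the marginal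
cost of generator `i`. -/
def IsKKT {n : ℕ} (C' : Fin n → ℝ → ℝ) (Pd P : Fin n → ℝ) (lam : ℝ)
    (mu : Fin n → ℝ) : Prop :=
  (∀ i, C' i (P i) = lam + mu i) ∧ (∑ i, P i = ∑ i, Pd i) ∧
    (∀ i, 0 ≤ P i) ∧ (∀ i, 0 ≤ mu i) ∧ (∑ i, P i * mu i = 0)

/-- Payoff of a generator with cost `Ci` bidding `bi` and producing `Pi`. -/
def Payoff (Ci : ℝ → ℝ) (bi Pi : ℝ) : ℝ := Pi * bi - Ci Pi

/-- `bstar` is a Nash equilibrium of the inelastic electricity market game. -/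
def IsNash {n : ℕ} (C : Fin n → ℝ → ℝ) (Pd bstar : Fin n → ℝ) : Prop :=
  (∀ i, 0 ≤ bstar i) ∧
  ∃ P0, IsISOOpt Pd bstar P0 ∧
    ∀ i (bi : ℝ), 0 ≤ bi → bi ≠ bstar i →
      ∀ P, IsISOOpt Pd (Function.update bstar i bi) P →
        Payoff (C i) bi (P i) ≤ Payoff (C i) (bstar i) (P0 i)

/-- `bstar` is an efficient bid: the optimizer of the ED problem is also an
optimizer of the ISO problem for bids `bstar`, and each `Pstar i` maximizes
the profit `P ↦ P * bstar i - C i P` over `P ≥ 0`. -/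
def IsEfficientBid {n : ℕ} (C : Fin n → ℝ → ℝ) (Pd bstar : Fin n → ℝ) : Prop :=
  (∀ i, 0 ≤ bstar i) ∧
  ∀ Pstar, IsEDOpt C Pd Pstar →
    IsISOOpt Pd bstar Pstar ∧
      ∀ i, ∀ P, 0 ≤ P → Payoff (C i) (bstar i) P ≤ Payoff (C i) (bstar i) (Pstar i)

/-- Standing assumptions on a generator cost function: continuously
differentiable with derivative `Cf'`, strongly convex on `[0, ∞)`, and
nonnegative marginal cost at zero. -/
def CostAssumptions (Cf Cf' : ℝ → ℝ) : Prop :=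
  (∀ x, HasDerivAt Cf (Cf' x) x) ∧ Continuous Cf' ∧
    (∃ m : ℝ, 0 < m ∧
      ∀ x y, 0 ≤ x → 0 ≤ y → (Cf' x - Cf' y) * (x - y) ≥ m * (x - y) ^ 2) ∧
    0 ≤ Cf' 0

/-- `P` is the unique maximizer of the profit `Q ↦ β * Q - Cf Q` over `Q ≥ 0`. -/
def IsUniqueArgmaxProfit (Cf : ℝ → ℝ) (β P : ℝ) : Prop :=
  0 ≤ P ∧ (∀ Q, 0 ≤ Q → β * Q - Cf Q ≤ β * P - Cf P) ∧
    ∀ Q, 0 ≤ Q → (∀ R, 0 ≤ R → β * R - Cf R ≤ β * Q - Cf Q) → Q = P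


lemma tangent_line_aux {Cf Cf' : ℝ → ℝ} (hd : ∀ x, HasDerivAt Cf (Cf' x) x)
    (hmono : ∀ x y, 0 ≤ x → 0 ≤ y → x ≤ y → Cf' x ≤ Cf' y)
    {a b : ℝ} (ha : 0 ≤ a) (hb : 0 ≤ b) :
    Cf a + Cf' a * (b - a) ≤ Cf b := by
  rcases lt_trichotomy a b with h | h | h
  · obtain ⟨c, hc, hceq⟩ := exists_hasDerivAt_eq_slope Cf Cf' h
      (fun x _ => (hd x).continuousAt.continuousWithinAt) (fun x _ => hd x)
    have h1 : Cf' a ≤ Cf' c := hmono a c ha (ha.trans hc.1.le) hc.1.le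
    have hne : b - a ≠ 0 := sub_ne_zero.mpr h.ne'
    have h2 : Cf b - Cf a = Cf' c * (b - a) := by
      rw [hceq, div_mul_cancel₀ _ hne]
    nlinarith [sub_pos.mpr h]
  · simp [h]
  · obtain ⟨c, hc, hceq⟩ := exists_hasDerivAt_eq_slope Cf Cf' h
      (fun x _ => (hd x).continuousAt.continuousWithinAt) (fun x _ => hd x)
    have h1 : Cf' c ≤ Cf' a := hmono c a (hb.trans hc.1.le) ha hc.2.le
    have hne : a - b ≠ 0 := sub_ne_zero.mpr h.ne'
    have h2 : Cf a - Cf b = Cf' c * (a - b) := by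
      rw [hceq, div_mul_cancel₀ _ hne]
    nlinarith [sub_pos.mpr h]

/-- If `(Pstar, lam, mu)` is a KKT triple for the ED problem and
`lam ≤ bstar i ≤ C' i (Pstar i)` for all `i`, then for every `i`, `Pstar i`
maximizes the profit `P ↦ P * bstar i - C i P` over `P ≥ 0`. -/
theorem kkt_bid_profit_maximizer {n : ℕ} (hn : 1 ≤ n)
    (C C' : Fin n → ℝ → ℝ) (hC : ∀ i, CostAssumptions (C i) (C' i))
    (Pd : Fin n → ℝ) (hPd : ∀ i, 0 ≤ Pd i) (hPdpos : 0 < ∑ i, Pd i)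
    (Pstar : Fin n → ℝ) (lam : ℝ) (mu : Fin n → ℝ)
    (hKKT : IsKKT C' Pd Pstar lam mu)
    (bstar : Fin n → ℝ)
    (hb : ∀ i, lam ≤ bstar i ∧ bstar i ≤ C' i (Pstar i)) :
    ∀ i, ∀ P, 0 ≤ P →
      Payoff (C i) (bstar i) P ≤ Payoff (C i) (bstar i) (Pstar i) := by
  obtain ⟨hstat, hbal, hPnn, hmunn, hcomp⟩ := hKKT
  intro i P hP
  obtain ⟨hd, hcont, ⟨m, hm, hsc⟩, h0⟩ := hC i
  have hmono : ∀ x y, 0 ≤ x → 0 ≤ y → x ≤ y → C' i x ≤ C' i y := by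
    intro x y hx hy hxy
    rcases eq_or_lt_of_le hxy with rfl | hlt
    · exact le_refl _
    · nlinarith [hsc y x hy hx, sub_pos.mpr hlt, mul_pos hm (mul_pos (sub_pos.mpr hlt) (sub_pos.mpr hlt))]
  have htan := tangent_line_aux hd hmono (hPnn i) hP
  have key : (P - Pstar i) * bstar i ≤ C' i (Pstar i) * (P - Pstar i) := by
    rcases eq_or_lt_of_le (hPnn i) with hz | hpos
    · have hb2 := (hb i).2
      nlinarith [hP, hz]
    · have hmu : Pstar i * mu i = 0 := by
        have := (Finset.sum_eq_zero_iff_of_nonneg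
          (fun j _ => mul_nonneg (hPnn j) (hmunn j))).mp hcomp i (Finset.mem_univ i)
        exact this
      have hmu0 : mu i = 0 := by
        rcases mul_eq_zero.mp hmu with h | h
        · exact absurd h (ne_of_gt hpos)
        · exact h
      have hbeq : bstar i = C' i (Pstar i) := by
        have := hstat i
        have := (hb i).1
        have := (hb i).2
        linarith [hstat i, (hb i).1, (hb i).2]
      rw [hbeq]; ring_nf; exact le_refl _
  simp only [Payoff]
  nlinarith [key, htan]
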